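/- A bounded sequence (f_n) in C(K, X) converges weakly to 0 if and only if for every t ∈ K the sequence (f_n(t)) converges weakly to 0 in X. -/

import Mathlib

open Filter Topology

section Defs

variable {Z : Type*} [NormedAddCommGroup Z] [NormedSpace ℝ Z]

/-- A sequence is weakly null: every continuous linear functional sends it to a null sequence. -/
def WeaklyNull (x : ℕ → Z) : Prop :=
  ∀ f : Z →L[ℝ] ℝ, Tendsto (fun n => f (x n)) atTop (𝓝 (0 : ℝ))

/-- A sequence is weakly `p`-summable: every functional sends it into `ℓ_p`. -/
def WeaklyPSummable (p : ENNReal) (x : ℕ → Z) : Prop :=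
  ∀ f : Z →L[ℝ] ℝ, Memℓp (fun n => f (x n)) p

/-- A set is limited: every weak*-null sequence of functionals tends to `0` uniformly on it. -/
def IsLimitedSet (A : Set Z) : Prop :=
  ∀ g : ℕ → Z →L[ℝ] ℝ, (∀ z : Z, Tendsto (fun k => g k z) atTop (𝓝 (0 : ℝ))) →
    ∀ ε > 0, ∃ N, ∀ k ≥ N, ∀ a ∈ A, |g k a| < ε

/-- A set is a Dunford–Pettis set: every weakly null sequence of functionals tends to `0`
uniformly on it. -/
def IsDPSet (A : Set Z) : Prop :=
  ∀ g : ℕ → Z →L[ℝ] ℝ, WeaklyNull g →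
    ∀ ε > 0, ∃ N, ∀ k ≥ N, ∀ a ∈ A, |g k a| < ε

end Defs

namespace Stmt6Aux

open MeasureTheory Set
open scoped ENNReal NNReal

/-! ### Scalar part: a dominated convergence theorem for functionals on `C(S, ℝ)`. -/

section Scalar

variable {S : Type*} [TopologicalSpace S] [CompactSpace S] [T2Space S]
variable (ψ : C(S, ℝ) →L[ℝ] ℝ)

/-- Functions dominated pointwise in absolute value by `g`. -/
def adm (g : C(S, ℝ)) : Set C(S, ℝ) := {h | ∀ x, |h x| ≤ g x}

/-- The "absolute value" of `ψ` evaluated at `g ≥ 0`. -/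
noncomputable def pFun (g : C(S, ℝ)) : ℝ := sSup ((fun h => ψ h) '' adm g)

lemma norm_le_of_adm {g h : C(S, ℝ)} (hh : h ∈ adm g) {c : ℝ} (hc : 0 ≤ c)
    (hgc : ∀ x, g x ≤ c) : ‖h‖ ≤ c := by
  refine (ContinuousMap.norm_le _ hc).mpr fun x => ?_
  rw [Real.norm_eq_abs]
  exact (hh x).trans (hgc x)

lemma psi_le_of_adm {g h : C(S, ℝ)} (hh : h ∈ adm g) {c : ℝ} (hc : 0 ≤ c)
    (hgc : ∀ x, g x ≤ c) : ψ h ≤ ‖ψ‖ * c := by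
  calc ψ h ≤ ‖ψ h‖ := le_abs_self _
    _ ≤ ‖ψ‖ * ‖h‖ := ψ.le_opNorm h
    _ ≤ ‖ψ‖ * c := by
        exact mul_le_mul_of_nonneg_left (norm_le_of_adm hh hc hgc) (norm_nonneg ψ)

lemma bddAbove_pSet (g : C(S, ℝ)) : BddAbove ((fun h => ψ h) '' adm g) := by
  refine ⟨‖ψ‖ * ‖g‖, ?_⟩
  rintro y ⟨h, hh, rfl⟩
  exact psi_le_of_adm ψ hh (norm_nonneg g) fun x =>
    (le_abs_self _).trans (ContinuousMap.norm_coe_le_norm g x)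

lemma le_pFun {g h : C(S, ℝ)} (hh : h ∈ adm g) : ψ h ≤ pFun ψ g :=
  le_csSup (bddAbove_pSet ψ g) ⟨h, hh, rfl⟩

lemma zero_mem_adm {g : C(S, ℝ)} (hg : ∀ x, 0 ≤ g x) : (0 : C(S, ℝ)) ∈ adm g := by
  intro x; simpa using hg x

lemma pFun_nonneg {g : C(S, ℝ)} (hg : ∀ x, 0 ≤ g x) : 0 ≤ pFun ψ g := by
  have := le_pFun ψ (zero_mem_adm hg)
  simpa using this

lemma pFun_le_of_bound {g : C(S, ℝ)} {c : ℝ} (hc : 0 ≤ c) (hgc : ∀ x, g x ≤ c) :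
    pFun ψ g ≤ ‖ψ‖ * c := by
  refine Real.sSup_le ?_ (by positivity)
  rintro y ⟨h, hh, rfl⟩
  exact psi_le_of_adm ψ hh hc hgc

lemma pFun_mono {f g : C(S, ℝ)} (hf : ∀ x, 0 ≤ f x) (hfg : ∀ x, f x ≤ g x) :
    pFun ψ f ≤ pFun ψ g := by
  have hg : ∀ x, 0 ≤ g x := fun x => (hf x).trans (hfg x)
  refine Real.sSup_le ?_ (pFun_nonneg ψ hg)
  rintro y ⟨h, hh, rfl⟩
  exact le_pFun ψ fun x => (hh x).trans (hfg x)

/-- Pointwise splitting: the Riesz decomposition inequality. -/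
lemma real_split (a b c : ℝ) (hb : 0 ≤ b) (hc : 0 ≤ c) (h : |a| ≤ b + c) :
    |min a b ⊔ (-b)| ≤ b ∧ |a - (min a b ⊔ (-b))| ≤ c := by
  rw [abs_le] at h
  constructor <;> rw [abs_le] <;> constructor <;>
    simp only [min_def, max_def] <;> split_ifs <;> linarith

lemma pFun_add {f g : C(S, ℝ)} (hf : ∀ x, 0 ≤ f x) (hg : ∀ x, 0 ≤ g x) :
    pFun ψ (f + g) = pFun ψ f + pFun ψ g := by
  have hfg : ∀ x, 0 ≤ (f + g) x := fun x => by
    simpa using add_nonneg (hf x) (hg x)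
  apply le_antisymm
  · refine Real.sSup_le ?_ (add_nonneg (pFun_nonneg ψ hf) (pFun_nonneg ψ hg))
    rintro y ⟨h, hh, rfl⟩
    set h1 : C(S, ℝ) := (h ⊓ f) ⊔ (-f) with hh1
    have h1app : ∀ x, h1 x = min (h x) (f x) ⊔ (-(f x)) := fun x => rfl
    have hm1 : h1 ∈ adm f := by
      intro x
      rw [h1app]
      exact (real_split (h x) (f x) (g x) (hf x) (hg x) (by simpa using hh x)).1
    have hm2 : h - h1 ∈ adm g := by
      intro x
      have : (h - h1) x = h x - (min (h x) (f x) ⊔ (-(f x))) := by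
        simp [h1app]
      rw [this]
      exact (real_split (h x) (f x) (g x) (hf x) (hg x) (by simpa using hh x)).2
    have heq : ψ h = ψ h1 + ψ (h - h1) := by
      rw [← map_add]; congr 1; abel
    show ψ h ≤ pFun ψ f + pFun ψ g
    rw [heq]
    exact add_le_add (le_pFun ψ hm1) (le_pFun ψ hm2)
  · refine le_of_forall_pos_le_add fun ε hε => ?_
    have hne1 : ((fun h => ψ h) '' adm f).Nonempty := ⟨ψ 0, 0, zero_mem_adm hf, rfl⟩
    have hne2 : ((fun h => ψ h) '' adm g).Nonempty := ⟨ψ 0, 0, zero_mem_adm hg, rfl⟩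
    obtain ⟨y1, hy1, hy1'⟩ := exists_lt_of_lt_csSup hne1
      (show pFun ψ f - ε / 2 < pFun ψ f by linarith)
    obtain ⟨y2, hy2, hy2'⟩ := exists_lt_of_lt_csSup hne2
      (show pFun ψ g - ε / 2 < pFun ψ g by linarith)
    obtain ⟨h1, hh1, rfl⟩ := hy1
    obtain ⟨h2, hh2, rfl⟩ := hy2
    have hsum : h1 + h2 ∈ adm (f + g) := by
      intro x
      have := abs_add_le (h1 x) (h2 x)
      have h1x := hh1 x
      have h2x := hh2 x
      simp only [ContinuousMap.add_apply]
      linarith [this]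
    have key : ψ h1 + ψ h2 ≤ pFun ψ (f + g) := by
      rw [← map_add]; exact le_pFun ψ hsum
    simp only at hy1' hy2'
    linarith

lemma abs_psi_le_pFun (h : C(S, ℝ)) : |ψ h| ≤ pFun ψ |h| := by
  have habs : ∀ x, |h x| ≤ |h| x := fun x => by
    simp [ContinuousMap.abs_apply]
  rw [abs_le]
  constructor
  · have h2 : ψ (-h) ≤ pFun ψ |h| := le_pFun ψ (fun x => by simpa using habs x)
    rw [map_neg] at h2
    linarith
  · exact le_pFun ψ habs

/-! ### The Riesz content associated to `pFun ψ`. -/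

/-- The set of test values for the content of a set. -/
def testSet (A : Set S) : Set ℝ :=
  (pFun ψ) '' {f : C(S, ℝ) | (∀ x, 0 ≤ f x) ∧ ∀ x ∈ A, 1 ≤ f x}

lemma testSet_nonempty (A : Set S) : (testSet ψ A).Nonempty :=
  ⟨pFun ψ 1, 1, ⟨fun _ => zero_le_one, fun _ _ => le_refl _⟩, rfl⟩

lemma testSet_bddBelow (A : Set S) : BddBelow (testSet ψ A) := by
  refine ⟨0, ?_⟩
  rintro y ⟨f, ⟨hf, _⟩, rfl⟩
  exact pFun_nonneg ψ hf

/-- The content of a set as a real number. -/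
noncomputable def contR (A : Set S) : ℝ := sInf (testSet ψ A)

lemma contR_nonneg (A : Set S) : 0 ≤ contR ψ A :=
  le_csInf (testSet_nonempty ψ A) (by rintro y ⟨f, ⟨hf, _⟩, rfl⟩; exact pFun_nonneg ψ hf)

lemma contR_le {A : Set S} {f : C(S, ℝ)} (hf0 : ∀ x, 0 ≤ f x) (hf1 : ∀ x ∈ A, 1 ≤ f x) :
    contR ψ A ≤ pFun ψ f :=
  csInf_le (testSet_bddBelow ψ A) ⟨f, ⟨hf0, hf1⟩, rfl⟩

lemma contR_mono {A B : Set S} (hAB : A ⊆ B) : contR ψ A ≤ contR ψ B :=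
  csInf_le_csInf (testSet_bddBelow ψ A) (testSet_nonempty ψ B)
    (by rintro y ⟨f, ⟨hf0, hf1⟩, rfl⟩; exact ⟨f, ⟨hf0, fun x hx => hf1 x (hAB hx)⟩, rfl⟩)

lemma exists_test_lt {A : Set S} {ε : ℝ} (hε : 0 < ε) :
    ∃ f : C(S, ℝ), (∀ x, 0 ≤ f x) ∧ (∀ x ∈ A, 1 ≤ f x) ∧ pFun ψ f < contR ψ A + ε := by
  obtain ⟨y, hy, hy'⟩ := exists_lt_of_csInf_lt (testSet_nonempty ψ A)
    (show contR ψ A < contR ψ A + ε by linarith)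
  obtain ⟨f, ⟨hf0, hf1⟩, rfl⟩ := hy
  exact ⟨f, hf0, hf1, hy'⟩

lemma contR_union_le (A B : Set S) : contR ψ (A ∪ B) ≤ contR ψ A + contR ψ B := by
  refine le_of_forall_pos_le_add fun ε hε => ?_
  obtain ⟨f1, hf10, hf11, hf1'⟩ := exists_test_lt ψ (A := A) (half_pos hε)
  obtain ⟨f2, hf20, hf21, hf2'⟩ := exists_test_lt ψ (A := B) (half_pos hε)
  have htest : ∀ x ∈ A ∪ B, 1 ≤ (f1 + f2) x := by
    rintro x (hx | hx) <;> simp only [ContinuousMap.add_apply]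
    · linarith [hf11 x hx, hf20 x]
    · linarith [hf21 x hx, hf10 x]
  have h0 : ∀ x, 0 ≤ (f1 + f2) x := fun x => by
    simpa using add_nonneg (hf10 x) (hf20 x)
  have := contR_le ψ h0 htest
  rw [pFun_add ψ hf10 hf20] at this
  linarith

lemma contR_union_disjoint {A B : Set S} (hA : IsClosed A) (hB : IsClosed B)
    (hd : Disjoint A B) : contR ψ A + contR ψ B ≤ contR ψ (A ∪ B) := by
  obtain ⟨u, hu0, hu1, hu01⟩ := exists_continuous_zero_one_of_isClosed hB hA hd.symm
  refine le_csInf (testSet_nonempty ψ _) ?_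
  rintro y ⟨f, ⟨hf0, hf1⟩, rfl⟩
  have huA : ∀ x ∈ A, u x = 1 := fun x hx => hu1 hx
  have huB : ∀ x ∈ B, u x = 0 := fun x hx => hu0 hx
  have hu0' : ∀ x, 0 ≤ u x := fun x => (hu01 x).1
  have hu1' : ∀ x, u x ≤ 1 := fun x => (hu01 x).2
  have h1 : contR ψ A ≤ pFun ψ (f * u) := by
    refine contR_le ψ (fun x => by simpa using mul_nonneg (hf0 x) (hu0' x)) fun x hx => ?_
    have := hf1 x (Or.inl hx)
    simp only [ContinuousMap.mul_apply, huA x hx, mul_one]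
    exact this
  have h2 : contR ψ B ≤ pFun ψ (f * (1 - u)) := by
    refine contR_le ψ (fun x => by
      simp only [ContinuousMap.mul_apply, ContinuousMap.sub_apply, ContinuousMap.one_apply]
      exact mul_nonneg (hf0 x) (by linarith [hu1' x])) fun x hx => ?_
    have := hf1 x (Or.inr hx)
    simp only [ContinuousMap.mul_apply, ContinuousMap.sub_apply, ContinuousMap.one_apply,
      huB x hx, sub_zero, mul_one]
    exact this
  have hsplit : pFun ψ (f * u) + pFun ψ (f * (1 - u)) = pFun ψ f := by
    rw [← pFun_add ψ (fun x => by simpa using mul_nonneg (hf0 x) (hu0' x))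
      (fun x => by
        simp only [ContinuousMap.mul_apply, ContinuousMap.sub_apply, ContinuousMap.one_apply]
        exact mul_nonneg (hf0 x) (by linarith [hu1' x]))]
    congr 1
    ext x
    simp only [ContinuousMap.add_apply, ContinuousMap.mul_apply, ContinuousMap.sub_apply,
      ContinuousMap.one_apply]
    ring
  linarith [h1, h2, hsplit.ge, hsplit.le]

/-- The Riesz content associated to `ψ`. -/
noncomputable def pCont : Content S where
  toFun K := ⟨contR ψ K, contR_nonneg ψ K⟩
  mono' K₁ K₂ h := by
    exact NNReal.coe_le_coe.mp (contR_mono ψ h)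
  sup_disjoint' K₁ K₂ hd h₁ h₂ := by
    ext
    push_cast
    refine le_antisymm ?_ ?_
    · exact
        contR_union_le ψ (K₁ : Set S) (K₂ : Set S)
    · exact contR_union_disjoint ψ h₁ h₂ hd
  sup_le' K₁ K₂ := by
    exact NNReal.coe_le_coe.mp (contR_union_le ψ (K₁ : Set S) (K₂ : Set S))

variable [MeasurableSpace S] [BorelSpace S]

/-- The measure associated to the content of `ψ`. -/
noncomputable def pMeas : Measure S := (pCont ψ).measure

lemma coe_pCont (Kc : TopologicalSpace.Compacts S) :
    ((pCont ψ).toFun Kc : ℝ≥0∞) = ENNReal.ofReal (contR ψ ↑Kc) := by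
  rw [← ENNReal.ofReal_coe_nnreal]; rfl

lemma pMeas_univ_le : pMeas ψ Set.univ ≤ ENNReal.ofReal (pFun ψ 1) := by
  rw [pMeas, Content.measure_apply _ MeasurableSet.univ,
    Content.outerMeasure_of_isOpen _ _ isOpen_univ]
  refine le_trans (Content.innerContent_le _ _ ⟨Set.univ, isCompact_univ⟩ subset_rfl) ?_
  rw [show ((pCont ψ) ⟨Set.univ, isCompact_univ⟩ : ℝ≥0∞) =
    ENNReal.ofReal (contR ψ Set.univ) from coe_pCont ψ _]
  exact ENNReal.ofReal_le_ofReal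
    (contR_le ψ (fun _ => zero_le_one) (fun _ _ => le_refl _))

instance pMeas_finite : IsFiniteMeasure (pMeas ψ) := by
  constructor
  exact lt_of_le_of_lt (pMeas_univ_le ψ) ENNReal.ofReal_lt_top

lemma contR_le_pMeas {Kset V : Set S} (hK : IsCompact Kset) (hV : IsOpen V)
    (hKV : Kset ⊆ V) : ENNReal.ofReal (contR ψ Kset) ≤ pMeas ψ V := by
  rw [pMeas, Content.measure_apply _ hV.measurableSet,
    Content.outerMeasure_of_isOpen _ _ hV]
  refine le_trans (le_of_eq (coe_pCont ψ ⟨Kset, hK⟩).symm) ?_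
  exact Content.le_innerContent _ ⟨Kset, hK⟩ ⟨V, hV⟩ hKV

/-- The key estimate. -/
lemma pFun_le_key (g : C(S, ℝ)) (hg0 : ∀ x, 0 ≤ g x) (hg1 : ∀ x, g x ≤ 1)
    {δ : ℝ} (hδ : 0 < δ) :
    pFun ψ g ≤ ‖ψ‖ * δ + (pMeas ψ {x | δ / 3 < g x}).toReal := by
  have hA : IsClosed {x | δ ≤ g x} := isClosed_le continuous_const g.continuous
  have hB : IsClosed {x : S | g x ≤ δ / 2} := isClosed_le g.continuous continuous_const
  have hd : Disjoint {x : S | g x ≤ δ / 2} {x | δ ≤ g x} := by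
    rw [Set.disjoint_left]
    intro x hx hx'
    simp only [Set.mem_setOf_eq] at hx hx'
    linarith
  obtain ⟨u, hu0, hu1, hu01⟩ := exists_continuous_zero_one_of_isClosed hB hA hd
  have hu0' : ∀ x, 0 ≤ u x := fun x => (hu01 x).1
  have hu1' : ∀ x, u x ≤ 1 := fun x => (hu01 x).2
  have hnn1 : ∀ x, 0 ≤ (g * (1 - u)) x := fun x => by
    simp only [ContinuousMap.mul_apply, ContinuousMap.sub_apply, ContinuousMap.one_apply]
    exact mul_nonneg (hg0 x) (by linarith [hu1' x])
  have hnn2 : ∀ x, 0 ≤ (g * u) x := fun x => by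
    simpa using mul_nonneg (hg0 x) (hu0' x)
  have hdecomp : pFun ψ g = pFun ψ (g * (1 - u)) + pFun ψ (g * u) := by
    rw [← pFun_add ψ hnn1 hnn2]
    congr 1
    ext x
    simp only [ContinuousMap.add_apply, ContinuousMap.mul_apply, ContinuousMap.sub_apply,
      ContinuousMap.one_apply]
    ring
  have hbound1 : pFun ψ (g * (1 - u)) ≤ ‖ψ‖ * δ := by
    refine pFun_le_of_bound ψ hδ.le fun x => ?_
    simp only [ContinuousMap.mul_apply, ContinuousMap.sub_apply, ContinuousMap.one_apply]
    by_cases hx : δ ≤ g x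
    · have : u x = 1 := hu1 hx
      rw [this]
      simpa using hδ.le
    · push_neg at hx
      nlinarith [hg0 x, hu0' x, hu1' x]
  have hbound2 : pFun ψ (g * u) ≤ pFun ψ u := by
    refine pFun_mono ψ hnn2 fun x => ?_
    simp only [ContinuousMap.mul_apply]
    nlinarith [hg1 x, hu0' x, hg0 x]
  have hsub : tsupport ↑u ⊆ {x | δ / 3 < g x} := by
    have h1 : Function.support ↑u ⊆ {x : S | δ / 2 < g x} := by
      intro x hx
      by_contra hc
      simp only [Set.mem_setOf_eq, not_lt] at hc
      exact hx (hu0 hc)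
    refine (closure_mono h1).trans ?_
    refine (closure_minimal (fun x hx => le_of_lt hx)
      (isClosed_le continuous_const g.continuous)).trans ?_
    intro x hx
    have hx' : δ / 2 ≤ g x := hx
    show δ / 3 < g x
    linarith
  have hKc : IsCompact (tsupport (u : C(S, ℝ))) := (isClosed_tsupport _).isCompact
  have hbound3 : pFun ψ u ≤ contR ψ (tsupport ↑u) := by
    refine le_csInf (testSet_nonempty ψ _) ?_
    rintro y ⟨fT, ⟨hf0, hf1⟩, rfl⟩
    refine pFun_mono ψ hu0' fun x => ?_
    by_cases hx : x ∈ tsupport (u : C(S, ℝ))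
    · exact le_trans (hu1' x) (hf1 x hx)
    · rw [image_eq_zero_of_notMem_tsupport hx]
      exact hf0 x
  have hVopen : IsOpen {x : S | δ / 3 < g x} := isOpen_lt continuous_const g.continuous
  have hbound4 : contR ψ (tsupport ↑u) ≤ (pMeas ψ {x | δ / 3 < g x}).toReal := by
    rw [← ENNReal.ofReal_le_iff_le_toReal (measure_ne_top _ _)]
    exact contR_le_pMeas ψ hKc hVopen hsub
  linarith

/-- Scalar dominated convergence: a bounded, pointwise null sequence in `C(S,ℝ)` is sent to a null
sequence by any continuous functional. -/
theorem scalar_weaklyNull (F : ℕ → C(S, ℝ)) (hb : ∀ n, ‖F n‖ ≤ 1)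
    (hpt : ∀ x, Tendsto (fun n => F n x) atTop (𝓝 (0 : ℝ))) :
    Tendsto (fun n => ψ (F n)) atTop (𝓝 (0 : ℝ)) := by
  rw [NormedAddCommGroup.tendsto_nhds_zero]
  intro ε hε
  set δ : ℝ := ε / (2 * (‖ψ‖ + 1)) with hδdef
  have hψ1 : (0 : ℝ) < ‖ψ‖ + 1 := by positivity
  have hδ : 0 < δ := by positivity
  set V : ℕ → Set S := fun n => {x | δ / 3 < |(F n : C(S, ℝ))| x} with hVdef
  have hVmble : ∀ n, MeasurableSet (V n) :=
    fun n => (isOpen_lt continuous_const (F n).continuous.abs).measurableSet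
  have hVlim : ∀ x, ∀ᶠ n in atTop, (x ∈ V n ↔ x ∈ (∅ : Set S)) := by
    intro x
    have h1 : Tendsto (fun n => |F n x|) atTop (𝓝 (0 : ℝ)) := by
      simpa using (hpt x).abs
    filter_upwards [h1.eventually_lt_const (by positivity : (0:ℝ) < δ / 3)] with n hn
    simp only [hVdef, Set.mem_setOf_eq, Set.mem_empty_iff_false, iff_false, not_lt]
    exact le_of_lt hn
  have hμ : Tendsto (fun n => pMeas ψ (V n)) atTop (𝓝 0) := by
    have := tendsto_measure_of_tendsto_indicator_of_isFiniteMeasure (L := atTop)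
      (μ := pMeas ψ) hVmble hVlim
    simpa using this
  have hev : ∀ᶠ n in atTop, pMeas ψ (V n) < ENNReal.ofReal (ε / 2) :=
    hμ.eventually_lt_const (ENNReal.ofReal_pos.mpr (by positivity))
  filter_upwards [hev] with n hn
  have hg1 : ∀ x, |(F n : C(S, ℝ))| x ≤ 1 := fun x => by
    simp only [ContinuousMap.abs_apply]
    calc |F n x| = ‖F n x‖ := (Real.norm_eq_abs _).symm
      _ ≤ ‖F n‖ := ContinuousMap.norm_coe_le_norm _ _
      _ ≤ 1 := hb n
  have key := pFun_le_key ψ |F n| (fun x => by simp [ContinuousMap.abs_apply]) hg1 hδ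
  have habs : ‖ψ (F n)‖ ≤ pFun ψ |F n| := by
    rw [Real.norm_eq_abs]
    exact abs_psi_le_pFun ψ (F n)
  have hμn : (pMeas ψ (V n)).toReal < ε / 2 := by
    rw [← ENNReal.lt_ofReal_iff_toReal_lt (measure_ne_top _ _)]
    exact hn
  have hδbound : ‖ψ‖ * δ ≤ ε / 2 := by
    have h1 : δ * (‖ψ‖ + 1) = ε / 2 := by
      rw [hδdef]; field_simp
    nlinarith [norm_nonneg ψ, hδ.le]
  calc ‖ψ (F n)‖ ≤ pFun ψ |F n| := habs
    _ ≤ ‖ψ‖ * δ + (pMeas ψ {x | δ / 3 < |(F n : C(S, ℝ))| x}).toReal := key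
    _ = ‖ψ‖ * δ + (pMeas ψ (V n)).toReal := rfl
    _ < ε / 2 + ε / 2 := by linarith
    _ = ε := by ring

end Scalar

/-! ### Reduction of the vector-valued case to the scalar case. -/

section Reduction

variable {K X : Type*} [TopologicalSpace K] [CompactSpace K] [T2Space K]
variable [NormedAddCommGroup X] [NormedSpace ℝ X] [CompleteSpace X]

/-- The closed unit ball of the dual, with the weak-star topology. -/
def ballSet (X : Type*) [NormedAddCommGroup X] [NormedSpace ℝ X] : Set (WeakDual ℝ X) :=
  WeakDual.toStrongDual ⁻¹' Metric.closedBall 0 1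

instance : CompactSpace (ballSet X) :=
  isCompact_iff_compactSpace.mp (WeakDual.isCompact_closedBall (0 : StrongDual ℝ X) 1)

lemma ball_norm_le (z : ballSet X) : ‖WeakDual.toStrongDual (z : WeakDual ℝ X)‖ ≤ 1 :=
  mem_closedBall_zero_iff.mp z.2

lemma ball_apply_le (z : ballSet X) (y : X) : ‖(z : WeakDual ℝ X) y‖ ≤ ‖y‖ := by
  calc ‖(z : WeakDual ℝ X) y‖ = ‖WeakDual.toStrongDual (z : WeakDual ℝ X) y‖ := rfl
    _ ≤ ‖WeakDual.toStrongDual (z : WeakDual ℝ X)‖ * ‖y‖ :=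
        (WeakDual.toStrongDual (z : WeakDual ℝ X)).le_opNorm y
    _ ≤ 1 * ‖y‖ := mul_le_mul_of_nonneg_right (ball_norm_le z) (norm_nonneg y)
    _ = ‖y‖ := one_mul _

/-- The embedding of `C(K, X)` into `C(ball(X*) × K, ℝ)`. -/
noncomputable def Jfun (f : C(K, X)) : C(ballSet X × K, ℝ) where
  toFun z := (z.1 : WeakDual ℝ X) (f z.2)
  continuous_toFun := by
    refine continuous_iff_continuousAt.mpr fun z₀ => ?_
    have c1 : Continuous fun z : ballSet X × K => (z.1 : WeakDual ℝ X) (f z₀.2) :=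
      (WeakDual.eval_continuous (f z₀.2)).comp (continuous_subtype_val.comp continuous_fst)
    have c2 : Continuous fun z : ballSet X × K => ‖f z.2 - f z₀.2‖ :=
      continuous_norm.comp ((f.continuous.comp continuous_snd).sub continuous_const)
    have hzero : Tendsto (fun z : ballSet X × K =>
        (z.1 : WeakDual ℝ X) (f z.2) - (z.1 : WeakDual ℝ X) (f z₀.2)) (𝓝 z₀) (𝓝 0) := by
      apply squeeze_zero_norm (fun z => ?_) (c2.tendsto' z₀ _ (by simp))
      calc ‖(z.1 : WeakDual ℝ X) (f z.2) - (z.1 : WeakDual ℝ X) (f z₀.2)‖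
          = ‖(z.1 : WeakDual ℝ X) (f z.2 - f z₀.2)‖ := by rw [map_sub]
        _ ≤ ‖f z.2 - f z₀.2‖ := ball_apply_le z.1 _
    have := hzero.add (c1.tendsto z₀)
    rw [zero_add] at this
    refine this.congr fun z => ?_
    ring

lemma Jfun_apply (f : C(K, X)) (z : ballSet X × K) :
    Jfun f z = (z.1 : WeakDual ℝ X) (f z.2) := rfl

/-- `Jfun` as a linear map. -/
noncomputable def Jlin : C(K, X) →ₗ[ℝ] C(ballSet X × K, ℝ) where
  toFun := Jfun
  map_add' f g := by ext z; simp [Jfun_apply]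
  map_smul' c f := by ext z; simp [Jfun_apply]

lemma norm_Jfun_le (f : C(K, X)) : ‖Jfun f‖ ≤ ‖f‖ := by
  refine ContinuousMap.norm_le _ (norm_nonneg f) |>.mpr fun z => ?_
  exact (ball_apply_le z.1 (f z.2)).trans (ContinuousMap.norm_coe_le_norm f z.2)

lemma norm_le_Jfun (f : C(K, X)) : ‖f‖ ≤ ‖Jfun f‖ := by
  refine ContinuousMap.norm_le _ (norm_nonneg _) |>.mpr fun t => ?_
  obtain ⟨g, hg1, hg2⟩ := exists_dual_vector'' ℝ (f t)
  have hmem : WeakDual.toStrongDual.symm g ∈ ballSet X := by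
    simp only [ballSet, Set.mem_preimage, LinearEquiv.apply_symm_apply,
      mem_closedBall_zero_iff]
    exact hg1
  set z : ballSet X × K := (⟨WeakDual.toStrongDual.symm g, hmem⟩, t) with hz
  have happ : Jfun f z = g (f t) := rfl
  calc ‖f t‖ = g (f t) := hg2.symm
    _ ≤ ‖Jfun f z‖ := by rw [happ, Real.norm_eq_abs]; exact le_abs_self _
    _ ≤ ‖Jfun f‖ := ContinuousMap.norm_coe_le_norm _ _

lemma Jlin_injective : Function.Injective (Jlin (K := K) (X := X)) := by
  intro a b hab
  have h1 : ‖a - b‖ ≤ ‖Jfun (a - b)‖ := norm_le_Jfun _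
  have h2 : Jfun (a - b) = 0 := by
    have : Jlin (a - b) = 0 := by rw [map_sub, hab, sub_self]
    exact this
  rw [h2, norm_zero] at h1
  rw [← sub_eq_zero]
  exact norm_le_zero_iff.mp h1

/-- The heart of the proof: a bounded, pointwise weakly null sequence is sent to a null sequence
by every continuous functional on `C(K, X)`. -/
theorem reverse_direction (f : ℕ → C(K, X)) (M : ℝ) (hf : ∀ n, ‖f n‖ ≤ M)
    (hpt : ∀ t : K, ∀ g : X →L[ℝ] ℝ, Tendsto (fun n => g (f n t)) atTop (𝓝 (0 : ℝ)))
    (φ : C(K, X) →L[ℝ] ℝ) : Tendsto (fun n => φ (f n)) atTop (𝓝 (0 : ℝ)) := by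
  classical
  letI : MeasurableSpace (ballSet X × K) := borel _
  haveI : BorelSpace (ballSet X × K) := ⟨rfl⟩
  set C : ℝ := max M 0 + 1 with hCdef
  have hC : 0 < C := by positivity
  set F : ℕ → C(ballSet X × K, ℝ) := fun n => Jfun ((C⁻¹ : ℝ) • f n) with hFdef
  have hb : ∀ n, ‖F n‖ ≤ 1 := by
    intro n
    refine (norm_Jfun_le _).trans ?_
    rw [norm_smul, Real.norm_eq_abs, abs_inv, abs_of_pos hC]
    rw [inv_mul_le_iff₀ hC, mul_one]
    calc ‖f n‖ ≤ M := hf n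
      _ ≤ max M 0 := le_max_left _ _
      _ ≤ C := by rw [hCdef]; linarith
  have hpt' : ∀ z : ballSet X × K, Tendsto (fun n => F n z) atTop (𝓝 (0 : ℝ)) := by
    intro z
    have h1 := hpt z.2 (WeakDual.toStrongDual (z.1 : WeakDual ℝ X))
    have h2 : ∀ n, F n z = C⁻¹ * (WeakDual.toStrongDual (z.1 : WeakDual ℝ X)) (f n z.2) := by
      intro n
      rw [hFdef]
      simp only [Jfun_apply, ContinuousMap.coe_smul, Pi.smul_apply, _root_.map_smul,
        smul_eq_mul]
      rfl
    rw [show (fun n => F n z) = fun n =>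
      C⁻¹ * (WeakDual.toStrongDual (z.1 : WeakDual ℝ X)) (f n z.2) from funext h2]
    simpa using h1.const_mul C⁻¹
  -- Extend `φ ∘ J⁻¹` from the range of `J` to all of `C(ballSet X × K, ℝ)` by Hahn-Banach.
  set p : Submodule ℝ C(ballSet X × K, ℝ) := LinearMap.range (Jlin (K := K) (X := X)) with hp
  set e : C(K, X) ≃ₗ[ℝ] p := LinearEquiv.ofInjective Jlin Jlin_injective with he
  have hJe : ∀ y : p, Jfun (e.symm y) = (y : C(ballSet X × K, ℝ)) := by
    intro y
    have : (e (e.symm y) : C(ballSet X × K, ℝ)) = (y : C(ballSet X × K, ℝ)) := by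
      rw [e.apply_symm_apply]
    rw [← this, he]
    exact (LinearEquiv.ofInjective_apply Jlin (e.symm y)).symm ▸ rfl
  set χlin : p →ₗ[ℝ] ℝ := φ.toLinearMap ∘ₗ (e.symm : p →ₗ[ℝ] C(K, X)) with hχ
  have hbound : ∀ y : p, ‖χlin y‖ ≤ ‖φ‖ * ‖y‖ := by
    intro y
    have h1 : χlin y = φ (e.symm y) := rfl
    rw [h1]
    calc ‖φ (e.symm y)‖ ≤ ‖φ‖ * ‖e.symm y‖ := φ.le_opNorm _
      _ ≤ ‖φ‖ * ‖y‖ := by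
          refine mul_le_mul_of_nonneg_left ?_ (norm_nonneg φ)
          calc ‖e.symm y‖ ≤ ‖Jfun (e.symm y)‖ := norm_le_Jfun _
            _ = ‖(y : C(ballSet X × K, ℝ))‖ := by rw [hJe]
            _ = ‖y‖ := rfl
  set χ : p →L[ℝ] ℝ := χlin.mkContinuous ‖φ‖ hbound with hχ'
  obtain ⟨ψ, hψext, -⟩ := exists_extension_norm_eq p χ
  have hψJ : ∀ g : C(K, X), ψ (Jfun g) = φ g := by
    intro g
    have hmem : Jfun g ∈ p := ⟨g, rfl⟩
    have h1 := hψext ⟨Jfun g, hmem⟩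
    have h2 : e.symm ⟨Jfun g, hmem⟩ = g := by
      have : e g = ⟨Jfun g, hmem⟩ := by
        apply Subtype.ext
        rw [he]
        exact LinearEquiv.ofInjective_apply Jlin g
      rw [← this, e.symm_apply_apply]
    calc ψ (Jfun g) = χ ⟨Jfun g, hmem⟩ := h1
      _ = φ (e.symm ⟨Jfun g, hmem⟩) := rfl
      _ = φ g := by rw [h2]
  have hscalar := scalar_weaklyNull ψ F hb hpt'
  have hEq : ∀ n, φ (f n) = C * ψ (F n) := by
    intro n
    rw [hFdef]
    simp only [hψJ, _root_.map_smul, smul_eq_mul]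
    field_simp
  rw [show (fun n => φ (f n)) = fun n => C * ψ (F n) from funext hEq]
  simpa using hscalar.const_mul C

end Reduction

end Stmt6Aux

theorem stmt6 {K X : Type*} [TopologicalSpace K] [CompactSpace K] [T2Space K]
    [NormedAddCommGroup X] [NormedSpace ℝ X] [CompleteSpace X]
    (f : ℕ → C(K, X)) (M : ℝ) (hf : ∀ n, ‖f n‖ ≤ M) :
    WeaklyNull f ↔ ∀ t : K, WeaklyNull (fun n => f n t) := by
  constructor
  · intro h t g
    exact h (g.comp (ContinuousMap.evalCLM ℝ t))
  · intro h φ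
    exact Stmt6Aux.reverse_direction f M hf (fun t g => h t g) φ
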